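/- There exist orientation-preserving homeomorphisms f and g of [0,1] and points z, x ∈ (0,1) such that, for the group G generated by f and g: the set of accumulation points of the G-orbit of z is exactly {0, 1}, and the G-orbit of x is dense in [0,1]. -/

import Mathlib

open Set Topology Filter

/-- Orientation-preserving homeomorphisms of `[0,1]`, i.e. increasing homeomorphisms of
`[0,1]` onto itself, are exactly the order isomorphisms of the unit interval
(an increasing bijection of `[0,1]` is automatically a homeomorphism). -/
abbrev IntervalHomeo := unitInterval ≃o unitInterval

/-- The `G`-orbit of a point `x`. -/
def orbit (G : Subgroup IntervalHomeo) (x : unitInterval) : Set unitInterval :=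
  {y | ∃ g ∈ G, g x = y}

/-- A set `M` is `G`-invariant if `g(M) = M` for every `g ∈ G`. -/
def Invariant (G : Subgroup IntervalHomeo) (M : Set unitInterval) : Prop :=
  ∀ g ∈ G, ⇑(g : IntervalHomeo) '' M = M

/-- The open interval `(0,1)` inside `[0,1]`. -/
def openI : Set unitInterval := {x | (x : ℝ) ∈ Set.Ioo (0 : ℝ) 1}

/-- `M` is contained in `S` and closed in the subspace topology of `S`. -/
def ClosedIn (S M : Set unitInterval) : Prop := M ⊆ S ∧ closure M ∩ S ⊆ M

noncomputable section
namespace S10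

/-- Möbius-type function on an interval `(c, c+1)`, extended by the identity. -/
def bfun (c k : ℝ) (x : ℝ) : ℝ :=
  if x ∈ Ioo c (c+1) then c + (k+1)*(x-c)/(1+k*(x-c)) else x

variable {c k : ℝ} (hk : 0 ≤ k)

lemma mdenom_pos (hk : 0 ≤ k) {u : ℝ} (hu : 0 ≤ u) : 0 < 1 + k*u := by nlinarith

lemma mval_mem (hk : 0 ≤ k) {u : ℝ} (hu : u ∈ Ioo (0:ℝ) 1) :
    (k+1)*u/(1+k*u) ∈ Ioo (0:ℝ) 1 := by
  obtain ⟨h0, h1⟩ := hu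
  have hd : 0 < 1 + k*u := mdenom_pos hk h0.le
  constructor
  · positivity
  · rw [div_lt_one hd]; nlinarith

lemma mval_mono (hk : 0 ≤ k) {u v : ℝ} (hu : 0 ≤ u) (huv : u < v) :
    (k+1)*u/(1+k*u) < (k+1)*v/(1+k*v) := by
  have hdu : 0 < 1 + k*u := mdenom_pos hk hu
  have hdv : 0 < 1 + k*v := mdenom_pos hk (hu.trans huv.le)
  rw [div_lt_div_iff₀ hdu hdv]; nlinarith

lemma bfun_strictMono (hk : 0 ≤ k) : StrictMono (bfun c k) := by
  intro x y hxy
  unfold bfun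
  by_cases hx : x ∈ Ioo c (c+1) <;> by_cases hy : y ∈ Ioo c (c+1) <;>
    simp only [hx, hy, if_true, if_false]
  · have := mval_mono hk (by linarith [hx.1] : (0:ℝ) ≤ x - c) (by linarith : x - c < y - c)
    linarith
  · -- x inside, y outside: y ≥ c+1
    have hyc : c + 1 ≤ y := by
      rcases lt_or_ge y (c+1) with h | h
      · exact absurd ⟨hx.1.trans hxy, h⟩ hy
      · exact h
    have := mval_mem hk (⟨by linarith [hx.1], by linarith [hx.2]⟩ : x - c ∈ Ioo (0:ℝ) 1)
    linarith [this.2]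
  · -- x outside, y inside: x ≤ c
    have hxc : x ≤ c := by
      rcases le_or_gt x c with h | h
      · exact h
      · exact absurd ⟨h, hxy.trans hy.2⟩ hx
    have := mval_mem hk (⟨by linarith [hy.1], by linarith [hy.2]⟩ : y - c ∈ Ioo (0:ℝ) 1)
    linarith [this.1]
  · exact hxy

lemma bfun_surjective (hk : 0 ≤ k) : Function.Surjective (bfun c k) := by
  intro y
  by_cases hy : y ∈ Ioo c (c+1)
  · refine ⟨c + (y - c)/(k+1 - k*(y-c)), ?_⟩
    obtain ⟨h1, h2⟩ := hy
    have hv0 : 0 < y - c := by linarith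
    have hv1 : y - c < 1 := by linarith
    have hd : 0 < k + 1 - k*(y-c) := by nlinarith
    have hu0 : 0 < (y-c)/(k+1-k*(y-c)) := by positivity
    have hu1 : (y-c)/(k+1-k*(y-c)) < 1 := by rw [div_lt_one hd]; nlinarith
    have hmem : c + (y - c)/(k+1 - k*(y-c)) ∈ Ioo c (c+1) := ⟨by linarith, by linarith⟩
    rw [bfun, if_pos hmem]
    have hne : k + 1 - k*(y-c) ≠ 0 := hd.ne'
    have hk1 : (k:ℝ) + 1 ≠ 0 := by positivity
    have e1 : 1 + k*((y-c)/(k+1-k*(y-c))) = (k+1)/(k+1-k*(y-c)) := by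
      field_simp; ring
    have e0 : c + (y-c)/(k+1-k*(y-c)) - c = (y-c)/(k+1-k*(y-c)) := by ring
    rw [e0, e1]
    field_simp; ring
  · exact ⟨y, by rw [bfun, if_neg hy]⟩

/-- The bump as an order isomorphism. -/
def bump (c k : ℝ) (hk : 0 ≤ k) : ℝ ≃o ℝ :=
  StrictMono.orderIsoOfSurjective (bfun c k) (bfun_strictMono hk) (bfun_surjective hk)

@[simp] lemma bump_apply (hk : 0 ≤ k) (x : ℝ) : bump c k hk x = bfun c k x := rfl

/-- translation by 1 -/
def Fmap : ℝ ≃o ℝ := OrderIso.addRight 1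

@[simp] lemma Fmap_apply (x : ℝ) : Fmap x = x + 1 := rfl

/-- The second generator: Möbius bumps on `(0,1)` and `(1,2)`. -/
def gR : ℝ ≃o ℝ := (bump 0 1 zero_le_one).trans (bump 1 2 zero_le_two)

lemma gR_apply (x : ℝ) : gR x = bfun 1 2 (bfun 0 1 x) := rfl

lemma int_not_mem_Ioo01 (n : ℤ) : (n:ℝ) ∉ Ioo (0:ℝ) (0+1) := by
  rintro ⟨h1, h2⟩
  have : (0:ℤ) < n := by exact_mod_cast h1
  have : (n:ℤ) < 1 := by exact_mod_cast (by linarith : (n:ℝ) < 1)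
  omega

lemma int_not_mem_Ioo12 (n : ℤ) : (n:ℝ) ∉ Ioo (1:ℝ) (1+1) := by
  rintro ⟨h1, h2⟩
  have : (1:ℤ) < n := by exact_mod_cast h1
  have : (n:ℤ) < 2 := by exact_mod_cast (by linarith : (n:ℝ) < 2)
  omega

lemma bfun_pos {c k x : ℝ} (h : x ∈ Ioo c (c+1)) :
    bfun c k x = c + (k+1)*(x-c)/(1+k*(x-c)) := if_pos h

lemma bfun_neg {c k x : ℝ} (h : x ∉ Ioo c (c+1)) : bfun c k x = x := if_neg h

lemma gR_int (n : ℤ) : gR (n:ℝ) = (n:ℝ) := by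
  rw [gR_apply, bfun_neg (int_not_mem_Ioo01 n), bfun_neg (int_not_mem_Ioo12 n)]

lemma Fmap_int (n : ℤ) : Fmap (n:ℝ) = ((n+1 : ℤ):ℝ) := by
  rw [Fmap_apply]; push_cast; ring

/-- `gR` acts as `x ↦ 2x/(1+x)` on `(0,1)`. -/
lemma gR_on01 {x : ℝ} (hx : x ∈ Ioo (0:ℝ) 1) : gR x = 2*x/(1+x) := by
  have hx' : x ∈ Ioo (0:ℝ) (0+1) := by simpa using hx
  have hmem := mval_mem zero_le_one (by simpa using hx : x - 0 ∈ Ioo (0:ℝ) 1)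
  have hval : (1+1)*(x-0)/(1+1*(x-0)) = 2*x/(1+x) := by
    have h1 : 1 + 1*(x-0) = 1 + x := by ring
    rw [h1]; ring_nf
  have hv : 2*x/(1+x) ∈ Ioo (0:ℝ) 1 := by rwa [hval] at hmem
  rw [gR_apply, bfun_pos hx', hval]
  have : (0:ℝ) + 2*x/(1+x) = 2*x/(1+x) := by ring
  rw [this, bfun_neg]
  rintro ⟨h1, h2⟩; linarith [hv.2]

/-- `gR` acts as `x ↦ 1 + 3(x-1)/(1+2(x-1))` on `(1,2)`. -/
lemma gR_on12 {x : ℝ} (hx : x ∈ Ioo (1:ℝ) 2) : gR x = 1 + 3*(x-1)/(1+2*(x-1)) := by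
  have hx0 : x ∉ Ioo (0:ℝ) (0+1) := by rintro ⟨h1, h2⟩; linarith [hx.1]
  have hx1 : x ∈ Ioo (1:ℝ) (1+1) := by rw [show (1:ℝ)+1 = 2 by norm_num]; exact hx
  rw [gR_apply, bfun_neg hx0, bfun_pos hx1]
  norm_num

/-- The chart `φ : ℝ → (0,1)`. -/
def phi (x : ℝ) : ℝ := (1 + x/(1+|x|))/2

lemma abs_denom_pos (x : ℝ) : 0 < 1 + |x| := by positivity

lemma phi_mem (x : ℝ) : phi x ∈ Ioo (0:ℝ) 1 := by
  have hd := abs_denom_pos x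
  have h1 : |x/(1+|x|)| < 1 := by
    rw [abs_div, abs_of_pos hd, div_lt_one hd]
    linarith [abs_nonneg x]
  rw [abs_lt] at h1
  constructor <;> [skip; skip] <;> unfold phi <;> linarith [h1.1, h1.2]

lemma phi_strictMono : StrictMono phi := by
  intro x y hxy
  unfold phi
  have hdx := abs_denom_pos x
  have hdy := abs_denom_pos y
  have key : x/(1+|x|) < y/(1+|y|) := by
    rw [div_lt_div_iff₀ hdx hdy]
    rcases le_or_gt 0 x with hx | hx <;> rcases le_or_gt 0 y with hy | hy
    · rw [abs_of_nonneg hx, abs_of_nonneg hy]; nlinarith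
    · linarith
    · rw [abs_of_neg hx, abs_of_nonneg hy]; nlinarith
    · rw [abs_of_neg hx, abs_of_neg hy]; nlinarith
  linarith

def phiInv (y : ℝ) : ℝ := (2*y-1)/(1-|2*y-1|)

lemma phi_phiInv {y : ℝ} (hy : y ∈ Ioo (0:ℝ) 1) : phi (phiInv y) = y := by
  set t := 2*y - 1 with ht
  have htabs : |t| < 1 := by rw [abs_lt]; constructor <;> [linarith [hy.1]; linarith [hy.2]]
  have hs : 0 < 1 - |t| := by linarith
  have habs : |t/(1-|t|)| = |t|/(1-|t|) := by rw [abs_div, abs_of_pos hs]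
  unfold phi phiInv
  rw [← ht, habs]
  have hd : 1 + |t|/(1-|t|) = 1/(1-|t|) := by field_simp; ring
  rw [hd]
  rw [div_div_div_eq]
  have : t * (1-|t|) / ((1-|t|) * 1) = t := by field_simp
  rw [this, ht]; ring

lemma phiInv_phi (x : ℝ) : phiInv (phi x) = x :=
  phi_strictMono.injective (phi_phiInv (phi_mem x))

/-! ### Lifting real order isomorphisms to the unit interval -/

def psi (t : ℝ) : unitInterval := ⟨phi t, Ioo_subset_Icc_self (phi_mem t)⟩

@[simp] lemma psi_coe (t : ℝ) : (psi t : ℝ) = phi t := rfl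

lemma psi_mono : StrictMono psi := fun s t hst => by
  rw [← Subtype.coe_lt_coe]; exact phi_strictMono hst

lemma psi_ne_zero (t : ℝ) : psi t ≠ 0 := by
  intro h
  have := congrArg (Subtype.val) h
  simp only [psi_coe, Set.Icc.coe_zero] at this
  exact (phi_mem t).1.ne' this

lemma psi_ne_one (t : ℝ) : psi t ≠ 1 := by
  intro h
  have := congrArg (Subtype.val) h
  simp only [psi_coe, Set.Icc.coe_one] at this
  exact (phi_mem t).2.ne this

def lf (h : ℝ ≃o ℝ) (p : unitInterval) : unitInterval :=
  if hp : 0 < (p:ℝ) ∧ (p:ℝ) < 1 then psi (h (phiInv (p:ℝ))) else p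

lemma lf_psi (h : ℝ ≃o ℝ) (t : ℝ) : lf h (psi t) = psi (h t) := by
  have hm := phi_mem t
  rw [lf, dif_pos (⟨hm.1, hm.2⟩ : 0 < ((psi t : unitInterval):ℝ) ∧ ((psi t : unitInterval):ℝ) < 1)]
  rw [psi_coe, phiInv_phi]

lemma lf_boundary (h : ℝ ≃o ℝ) (p : unitInterval) (hp : ¬(0 < (p:ℝ) ∧ (p:ℝ) < 1)) :
    lf h p = p := dif_neg hp

lemma unitInterval_cases (p : unitInterval) (hp : ¬(0 < (p:ℝ) ∧ (p:ℝ) < 1)) :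
    p = 0 ∨ p = 1 := by
  push_neg at hp
  rcases le_or_gt (p:ℝ) 0 with h | h
  · left; exact Subtype.ext (le_antisymm h p.2.1)
  · right; exact Subtype.ext (le_antisymm p.2.2 (hp h))

lemma lf_zero (h : ℝ ≃o ℝ) : lf h 0 = 0 := lf_boundary h 0 (by norm_num)

lemma lf_one (h : ℝ ≃o ℝ) : lf h 1 = 1 := lf_boundary h 1 (by norm_num)

lemma lf_interior_mem (h : ℝ ≃o ℝ) (p : unitInterval) (hp : 0 < (p:ℝ) ∧ (p:ℝ) < 1) :
    0 < (lf h p : ℝ) ∧ (lf h p : ℝ) < 1 := by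
  rw [lf, dif_pos hp, psi_coe]
  exact ⟨(phi_mem _).1, (phi_mem _).2⟩

lemma lf_strictMono (h : ℝ ≃o ℝ) : StrictMono (lf h) := by
  intro p q hpq
  have hpq' : (p:ℝ) < (q:ℝ) := hpq
  by_cases hp : 0 < (p:ℝ) ∧ (p:ℝ) < 1 <;> by_cases hq : 0 < (q:ℝ) ∧ (q:ℝ) < 1
  · rw [lf, dif_pos hp, lf, dif_pos hq]
    apply psi_mono
    apply h.strictMono
    apply phi_strictMono.lt_iff_lt.mp
    rw [phi_phiInv ⟨hp.1, hp.2⟩, phi_phiInv ⟨hq.1, hq.2⟩]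
    exact hpq'
  · -- q is an endpoint; q > p ≥ 0 so q = 1
    have hq1 : q = 1 := by
      rcases unitInterval_cases q hq with h0 | h1
      · exfalso; rw [h0] at hpq'; simp only [Set.Icc.coe_zero] at hpq'
        exact absurd hpq' (not_lt.mpr p.2.1)
      · exact h1
    rw [lf_boundary h q hq, hq1, ← Subtype.coe_lt_coe]
    have := lf_interior_mem h p hp
    simpa using this.2
  · have hp0 : p = 0 := by
      rcases unitInterval_cases p hp with h0 | h1
      · exact h0
      · exfalso; rw [h1] at hpq'; simp only [Set.Icc.coe_one] at hpq'
        exact absurd hpq' (not_lt.mpr q.2.2)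
    rw [lf_boundary h p hp, hp0, ← Subtype.coe_lt_coe]
    have := lf_interior_mem h q hq
    simpa using this.1
  · rw [lf_boundary h p hp, lf_boundary h q hq]; exact hpq

lemma lf_surjective (h : ℝ ≃o ℝ) : Function.Surjective (lf h) := by
  intro q
  by_cases hq : 0 < (q:ℝ) ∧ (q:ℝ) < 1
  · refine ⟨psi (h.symm (phiInv (q:ℝ))), ?_⟩
    rw [lf_psi, OrderIso.apply_symm_apply]
    exact Subtype.ext (phi_phiInv ⟨hq.1, hq.2⟩)
  · exact ⟨q, lf_boundary h q hq⟩

def lift (h : ℝ ≃o ℝ) : IntervalHomeo :=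
  StrictMono.orderIsoOfSurjective (lf h) (lf_strictMono h) (lf_surjective h)

@[simp] lemma lift_apply (h : ℝ ≃o ℝ) (p : unitInterval) : lift h p = lf h p := rfl

lemma lift_mul (h₁ h₂ : ℝ ≃o ℝ) : lift (h₁ * h₂) = lift h₁ * lift h₂ := by
  ext p
  show (lf (h₁ * h₂) p : ℝ) = (lf h₁ (lf h₂ p) : ℝ)
  by_cases hp : 0 < (p:ℝ) ∧ (p:ℝ) < 1
  · rw [lf, dif_pos hp, show lf h₂ p = psi (h₂ (phiInv (p:ℝ))) from dif_pos hp, lf_psi]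
    rfl
  · rw [lf_boundary _ p hp, lf_boundary _ p hp, lf_boundary _ p hp]

def liftHom : (ℝ ≃o ℝ) →* IntervalHomeo := MonoidHom.mk' lift lift_mul

lemma liftHom_apply (h : ℝ ≃o ℝ) (p : unitInterval) : liftHom h p = lf h p := rfl

/-! ### The group and orbits -/

def G0 : Subgroup (ℝ ≃o ℝ) := Subgroup.closure {Fmap, gR}

lemma Fmap_mem : Fmap ∈ G0 := Subgroup.subset_closure (mem_insert _ _)
lemma gR_mem : gR ∈ G0 := Subgroup.subset_closure (mem_insert_of_mem _ rfl)

lemma mul_apply' (a b : ℝ ≃o ℝ) (x : ℝ) : (a * b) x = a (b x) := rfl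
lemma inv_apply' (a : ℝ ≃o ℝ) (x : ℝ) : a⁻¹ x = a.symm x := rfl
lemma one_apply' (x : ℝ) : (1 : ℝ ≃o ℝ) x = x := rfl

def rOrbit (t : ℝ) : Set ℝ := {s | ∃ h ∈ G0, h t = s}

lemma orbit_lift (t : ℝ) :
    orbit (Subgroup.closure {liftHom Fmap, liftHom gR}) (psi t) = psi '' rOrbit t := by
  have hmap : Subgroup.closure {liftHom Fmap, liftHom gR} = Subgroup.map liftHom G0 := by
    rw [G0, MonoidHom.map_closure, Set.image_insert_eq, Set.image_singleton]
  rw [hmap]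
  ext y; constructor
  · rintro ⟨g, hg, rfl⟩
    rw [Subgroup.mem_map] at hg
    obtain ⟨h, hh, rfl⟩ := hg
    exact ⟨h t, ⟨h, hh, rfl⟩, by rw [liftHom_apply, lf_psi]⟩
  · rintro ⟨s, ⟨h, hh, rfl⟩, rfl⟩
    exact ⟨liftHom h, Subgroup.mem_map.mpr ⟨h, hh, rfl⟩, by rw [liftHom_apply, lf_psi]⟩

/-! ### The orbit of `0` at the real level is `ℤ` -/

lemma int_stable₂ : ∀ h ∈ G0, (∀ n : ℤ, ∃ m : ℤ, h (n:ℝ) = (m:ℝ)) ∧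
    (∀ n : ℤ, ∃ m : ℤ, h⁻¹ (n:ℝ) = (m:ℝ)) := by
  intro h hh
  refine Subgroup.closure_induction ?_ ?_ ?_ ?_ hh
  · rintro x (rfl | rfl)
    · refine ⟨fun n => ⟨n+1, Fmap_int n⟩, fun n => ⟨n-1, ?_⟩⟩
      rw [inv_apply', OrderIso.symm_apply_eq, Fmap_apply]
      push_cast; ring
    · exact ⟨fun n => ⟨n, gR_int n⟩,
        fun n => ⟨n, by rw [inv_apply', OrderIso.symm_apply_eq]; exact (gR_int n).symm⟩⟩
  · exact ⟨fun n => ⟨n, rfl⟩, fun n => ⟨n, rfl⟩⟩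
  · rintro a b _ _ ⟨ha, ha'⟩ ⟨hb, hb'⟩
    refine ⟨fun n => ?_, fun n => ?_⟩
    · obtain ⟨m, hm⟩ := hb n
      obtain ⟨m', hm'⟩ := ha m
      exact ⟨m', by rw [mul_apply', hm, hm']⟩
    · obtain ⟨m, hm⟩ := ha' n
      obtain ⟨m', hm'⟩ := hb' m
      exact ⟨m', by rw [mul_inv_rev, mul_apply', hm, hm']⟩
  · rintro a _ ⟨ha, ha'⟩
    exact ⟨ha', by rw [inv_inv]; exact ha⟩

lemma reach_int (n : ℤ) : ∃ h ∈ G0, h (0:ℝ) = (n:ℝ) := by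
  induction n using Int.induction_on with
  | zero => exact ⟨1, one_mem _, by rw [one_apply']; norm_num⟩
  | succ k ih =>
    obtain ⟨h, hh, hval⟩ := ih
    refine ⟨Fmap * h, mul_mem Fmap_mem hh, ?_⟩
    rw [mul_apply', hval, Fmap_int]
  | pred k ih =>
    obtain ⟨h, hh, hval⟩ := ih
    refine ⟨Fmap⁻¹ * h, mul_mem (inv_mem Fmap_mem) hh, ?_⟩
    rw [mul_apply', hval, inv_apply', OrderIso.symm_apply_eq, Fmap_apply]
    push_cast; ring

lemma rOrbit_zero : rOrbit 0 = {s | ∃ n : ℤ, s = (n:ℝ)} := by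
  ext s; constructor
  · rintro ⟨h, hh, rfl⟩
    obtain ⟨m, hm⟩ := (int_stable₂ h hh).1 0
    exact ⟨m, by rw [← hm]; norm_num⟩
  · rintro ⟨n, rfl⟩
    exact reach_int n

/-! ### Density of the orbit of `1/2` at the real level -/

def Reach (x : ℝ) : Prop := ∃ h ∈ G0, h (1/2 : ℝ) = x

lemma reach_half : Reach (1/2) := ⟨1, one_mem _, rfl⟩

lemma reach_m2 {x : ℝ} (hx : x ∈ Ioo (0:ℝ) 1) (hr : Reach x) : Reach (2*x/(1+x)) := by
  obtain ⟨h, hh, hv⟩ := hr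
  exact ⟨gR * h, mul_mem gR_mem hh, by rw [mul_apply', hv, gR_on01 hx]⟩

lemma reach_m2inv {x : ℝ} (hx : x ∈ Ioo (0:ℝ) 1) (hr : Reach x) : Reach (x/(2-x)) := by
  obtain ⟨h, hh, hv⟩ := hr
  refine ⟨gR⁻¹ * h, mul_mem (inv_mem gR_mem) hh, ?_⟩
  rw [mul_apply', hv, inv_apply', OrderIso.symm_apply_eq]
  have hu : x/(2-x) ∈ Ioo (0:ℝ) 1 := by
    constructor
    · apply div_pos hx.1; linarith [hx.2]
    · rw [div_lt_one (by linarith [hx.2])]; linarith [hx.2]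
  rw [gR_on01 hu]
  have h2 : (2:ℝ) - x > 0 := by linarith [hx.2]
  field_simp; ring

lemma reach_m3 {x : ℝ} (hx : x ∈ Ioo (0:ℝ) 1) (hr : Reach x) : Reach (3*x/(1+2*x)) := by
  obtain ⟨h, hh, hv⟩ := hr
  refine ⟨Fmap⁻¹ * (gR * (Fmap * h)), mul_mem (inv_mem Fmap_mem) (mul_mem gR_mem (mul_mem Fmap_mem hh)), ?_⟩
  rw [mul_apply', mul_apply', mul_apply', hv, Fmap_apply]
  have h12 : x + 1 ∈ Ioo (1:ℝ) 2 := ⟨by linarith [hx.1], by linarith [hx.2]⟩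
  rw [gR_on12 h12, inv_apply', OrderIso.symm_apply_eq, Fmap_apply]
  ring_nf

lemma reach_m3inv {x : ℝ} (hx : x ∈ Ioo (0:ℝ) 1) (hr : Reach x) : Reach (x/(3-2*x)) := by
  obtain ⟨h, hh, hv⟩ := hr
  refine ⟨Fmap⁻¹ * (gR⁻¹ * (Fmap * h)),
    mul_mem (inv_mem Fmap_mem) (mul_mem (inv_mem gR_mem) (mul_mem Fmap_mem hh)), ?_⟩
  rw [mul_apply', mul_apply', mul_apply', hv, Fmap_apply]
  have hd : (0:ℝ) < 3 - 2*x := by linarith [hx.2]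
  have hu : x/(3-2*x) ∈ Ioo (0:ℝ) 1 := by
    constructor
    · exact div_pos hx.1 hd
    · rw [div_lt_one hd]; linarith [hx.2]
  have hg : gR.symm (x + 1) = 1 + x/(3-2*x) := by
    rw [OrderIso.symm_apply_eq]
    have h12 : 1 + x/(3-2*x) ∈ Ioo (1:ℝ) 2 := ⟨by linarith [hu.1], by linarith [hu.2]⟩
    rw [gR_on12 h12]
    have hne : (3:ℝ) - 2*x ≠ 0 := hd.ne'
    have e : 1+2*(1 + x/(3-2*x) - 1) = 3/(3-2*x) := by field_simp; ring
    rw [e, show 1 + x/(3-2*x) - 1 = x/(3-2*x) by ring, mul_div_assoc', div_div_div_cancel_right₀ hne]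
    ring
  rw [inv_apply', inv_apply' gR, hg, OrderIso.symm_apply_eq, Fmap_apply]
  ring

lemma reach_add1 {x : ℝ} (hr : Reach x) : Reach (x+1) := by
  obtain ⟨h, hh, hv⟩ := hr
  exact ⟨Fmap * h, mul_mem Fmap_mem hh, by rw [mul_apply', hv, Fmap_apply]⟩

lemma reach_sub1 {x : ℝ} (hr : Reach x) : Reach (x-1) := by
  obtain ⟨h, hh, hv⟩ := hr
  refine ⟨Fmap⁻¹ * h, mul_mem (inv_mem Fmap_mem) hh, ?_⟩
  rw [mul_apply', hv, inv_apply', OrderIso.symm_apply_eq, Fmap_apply]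
  ring

/-- `mob μ = μ/(μ+1)`, the value of the Möbius orbit of `1/2`. -/
def mob (μ : ℝ) : ℝ := μ/(μ+1)

lemma mob_mem {μ : ℝ} (hμ : 0 < μ) : mob μ ∈ Ioo (0:ℝ) 1 := by
  constructor
  · exact div_pos hμ (by linarith)
  · rw [mob, div_lt_one (by linarith)]; linarith

lemma mob_two {μ : ℝ} (hμ : 0 < μ) : 2*(mob μ)/(1+mob μ) = mob (2*μ) := by
  rw [mob, mob]
  have h1 : μ + 1 ≠ 0 := by linarith
  have h2 : 1 + μ/(μ+1) = (2*μ+1)/(μ+1) := by field_simp; try ring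
  have h4 : 2*μ + 1 ≠ 0 := by linarith
  rw [h2, show 2*(μ/(μ+1)) = (2*μ)/(μ+1) by ring]
  field_simp

lemma mob_half {μ : ℝ} (hμ : 0 < μ) : (mob μ)/(2-mob μ) = mob (μ/2) := by
  rw [mob, mob]
  have h1 : μ + 1 ≠ 0 := by linarith
  have h2 : 2 - μ/(μ+1) = (μ+2)/(μ+1) := by field_simp; try ring
  rw [h2, div_div_div_eq]
  have h3 : μ/2 + 1 = (μ+2)/2 := by ring
  rw [h3]
  field_simp
  try ring

lemma mob_three {μ : ℝ} (hμ : 0 < μ) : 3*(mob μ)/(1+2*mob μ) = mob (3*μ) := by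
  rw [mob, mob]
  have h1 : μ + 1 ≠ 0 := by linarith
  have h2 : 1 + 2*(μ/(μ+1)) = (3*μ+1)/(μ+1) := by field_simp; try ring
  rw [h2]
  have h3 : 3*μ + 1 ≠ 0 := by linarith
  field_simp
  try ring

lemma mob_third {μ : ℝ} (hμ : 0 < μ) : (mob μ)/(3-2*mob μ) = mob (μ/3) := by
  rw [mob, mob]
  have h1 : μ + 1 ≠ 0 := by linarith
  have h2 : 3 - 2*(μ/(μ+1)) = (μ+3)/(μ+1) := by field_simp; try ring
  rw [h2, div_div_div_eq]
  have h3 : μ/3 + 1 = (μ+3)/3 := by ring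
  rw [h3]
  field_simp
  try ring

lemma two_zpow_pos (a : ℤ) : (0:ℝ) < 2^a := zpow_pos (by norm_num) a
lemma three_zpow_pos (b : ℤ) : (0:ℝ) < 3^b := zpow_pos (by norm_num) b

lemma pow23_pos (a b : ℤ) : (0:ℝ) < 2^a * 3^b := mul_pos (two_zpow_pos a) (three_zpow_pos b)

lemma reach_mob3 (b : ℤ) : Reach (mob ((3:ℝ)^b)) := by
  induction b using Int.induction_on with
  | zero =>
    rw [show mob ((3:ℝ)^(0:ℤ)) = 1/2 by norm_num [mob]]
    exact reach_half
  | succ k ih =>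
    have hpos := three_zpow_pos (k:ℤ)
    have := reach_m3 (mob_mem hpos) ih
    rw [mob_three hpos] at this
    have he : (3:ℝ) * 3^(k:ℤ) = 3^((k:ℤ)+1) := by
      rw [zpow_add_one₀ (by norm_num : (3:ℝ) ≠ 0)]; ring
    rwa [he] at this
  | pred k ih =>
    have hpos := three_zpow_pos (-(k:ℤ))
    have := reach_m3inv (mob_mem hpos) ih
    rw [mob_third hpos] at this
    have he : (3:ℝ)^(-(k:ℤ))/3 = 3^(-((k:ℤ)+1)) := by
      rw [zpow_neg, zpow_neg, zpow_add_one₀ (by norm_num : (3:ℝ) ≠ 0)]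
      rw [mul_inv]
      ring
    rw [he] at this
    rw [show (-(k:ℤ) - 1 : ℤ) = -((k:ℤ)+1) by ring]
    exact this

lemma reach_mob (a b : ℤ) : Reach (mob ((2:ℝ)^a * 3^b)) := by
  induction a using Int.induction_on with
  | zero => simpa using reach_mob3 b
  | succ k ih =>
    have hpos := pow23_pos (k:ℤ) b
    have := reach_m2 (mob_mem hpos) ih
    rw [mob_two hpos] at this
    have he : (2:ℝ) * (2^(k:ℤ) * 3^b) = 2^((k:ℤ)+1) * 3^b := by
      rw [zpow_add_one₀ (by norm_num : (2:ℝ) ≠ 0)]; ring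
    rwa [he] at this
  | pred k ih =>
    have hpos := pow23_pos (-(k:ℤ)) b
    have := reach_m2inv (mob_mem hpos) ih
    rw [mob_half hpos] at this
    have he : (2:ℝ)^(-(k:ℤ)) * 3^b / 2 = 2^(-((k:ℤ)+1)) * 3^b := by
      rw [zpow_neg, zpow_neg, zpow_add_one₀ (by norm_num : (2:ℝ) ≠ 0)]
      rw [mul_inv]
      ring
    rw [he] at this
    rw [show (-(k:ℤ) - 1 : ℤ) = -((k:ℤ)+1) by ring]
    exact this

lemma reach_translate {x : ℝ} (hr : Reach x) (q : ℤ) : Reach (x + q) := by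
  induction q using Int.induction_on with
  | zero => simpa using hr
  | succ k ih =>
    have := reach_add1 ih
    rw [show x + (((k:ℤ)+1 : ℤ) : ℝ) = x + ((k:ℤ) : ℝ) + 1 by push_cast; ring]
    exact this
  | pred k ih =>
    have := reach_sub1 ih
    rw [show x + ((-(k:ℤ)-1 : ℤ) : ℝ) = x + ((-(k:ℤ) : ℤ) : ℝ) - 1 by push_cast; ring]
    exact this

/-- The explicitly reachable dense set. -/
def Tset : Set ℝ := {x | ∃ q a b : ℤ, x = (q:ℝ) + mob ((2:ℝ)^a * 3^b)}

lemma Tset_subset_reach : ∀ x ∈ Tset, Reach x := by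
  rintro x ⟨q, a, b, rfl⟩
  have := reach_translate (reach_mob a b) q
  rwa [add_comm] at this

/-! ### Density of `Tset` -/

lemma log23_dense : Dense ((AddSubgroup.closure {Real.log 2, Real.log 3} : AddSubgroup ℝ) : Set ℝ) := by
  rcases AddSubgroup.dense_or_cyclic (AddSubgroup.closure {Real.log 2, Real.log 3}) with h | ⟨a, ha⟩
  · exact h
  · exfalso
    have h2 : Real.log 2 ∈ AddSubgroup.closure {Real.log 2, Real.log 3} :=
      AddSubgroup.subset_closure (mem_insert _ _)
    have h3 : Real.log 3 ∈ AddSubgroup.closure {Real.log 2, Real.log 3} :=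
      AddSubgroup.subset_closure (mem_insert_of_mem _ rfl)
    rw [ha, AddSubgroup.mem_closure_singleton] at h2 h3
    obtain ⟨p, hp⟩ := h2
    obtain ⟨q, hq⟩ := h3
    rw [zsmul_eq_mul] at hp hq
    have hl2 : 0 < Real.log 2 := Real.log_pos (by norm_num)
    have hl3 : 0 < Real.log 3 := Real.log_pos (by norm_num)
    -- q * log 2 = q * p * a = p * log 3
    have key : (q:ℝ) * Real.log 2 = (p:ℝ) * Real.log 3 := by
      rw [← hp, ← hq]; ring
    -- p and q have the same sign and are nonzero
    have hpq_pos : 0 < (p:ℝ) * (q:ℝ) := by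
      have hp0 : (p:ℝ) * a > 0 := by rw [hp]; exact hl2
      have hq0 : (q:ℝ) * a > 0 := by rw [hq]; exact hl3
      have ha : a ≠ 0 := by rintro rfl; simp at hp0
      have ha2 : 0 < a^2 := by positivity
      nlinarith [mul_pos hp0 hq0]
    -- WLOG both positive (if both negative, negate)
    obtain ⟨P, Q, hP, hQ, hkey⟩ : ∃ P Q : ℕ, 0 < P ∧ 0 < Q ∧
        (Q:ℝ) * Real.log 2 = (P:ℝ) * Real.log 3 := by
      rcases lt_trichotomy p 0 with hp1 | hp1 | hp1
      · -- p < 0, then q < 0 as well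
        have hq1 : q < 0 := by
          by_contra hq1
          push_neg at hq1
          have : (p:ℝ) < 0 := by exact_mod_cast hp1
          have : (0:ℝ) ≤ q := by exact_mod_cast hq1
          nlinarith
        refine ⟨(-p).toNat, (-q).toNat, ?_, ?_, ?_⟩
        · omega
        · omega
        · have e1 : (((-q).toNat : ℕ) : ℝ) = -(q:ℝ) := by
            have h' : ((-q).toNat : ℤ) = -q := Int.toNat_of_nonneg (by omega)
            exact_mod_cast congrArg (Int.cast : ℤ → ℝ) h'
          have e2 : (((-p).toNat : ℕ) : ℝ) = -(p:ℝ) := by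
            have h' : ((-p).toNat : ℤ) = -p := Int.toNat_of_nonneg (by omega)
            exact_mod_cast congrArg (Int.cast : ℤ → ℝ) h'
          rw [e1, e2]
          linarith [key]
      · exfalso
        rw [hp1] at hpq_pos
        norm_num at hpq_pos
      · have hq1 : 0 < q := by
          by_contra hq1
          push_neg at hq1
          have : (0:ℝ) < p := by exact_mod_cast hp1
          have : (q:ℝ) ≤ 0 := by exact_mod_cast hq1
          nlinarith
        refine ⟨p.toNat, q.toNat, by omega, by omega, ?_⟩
        have e1 : ((q.toNat : ℕ) : ℝ) = (q:ℝ) := by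
          have h' : (q.toNat : ℤ) = q := Int.toNat_of_nonneg (by omega)
          exact_mod_cast congrArg (Int.cast : ℤ → ℝ) h'
        have e2 : ((p.toNat : ℕ) : ℝ) = (p:ℝ) := by
          have h' : (p.toNat : ℤ) = p := Int.toNat_of_nonneg (by omega)
          exact_mod_cast congrArg (Int.cast : ℤ → ℝ) h'
        rw [e1, e2]
        linarith [key]
    -- exponentiate: 2^Q = 3^P
    have hexp : (2:ℝ)^Q = (3:ℝ)^P := by
      have := congrArg Real.exp hkey
      rwa [Real.exp_nat_mul, Real.exp_nat_mul, Real.exp_log (by norm_num : (0:ℝ) < 2),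
        Real.exp_log (by norm_num : (0:ℝ) < 3)] at this
    have hnat : (2:ℕ)^Q = 3^P := by exact_mod_cast hexp
    have hodd : (3:ℕ)^P % 2 = 1 := by
      rw [Nat.pow_mod]
      norm_num
    have heven : (2:ℕ)^Q % 2 = 0 := by
      rw [Nat.pow_mod]
      simp [Nat.zero_pow hQ]

    omega

lemma dense_mob_vals {u v : ℝ} (hu : 0 < u) (huv : u < v) (hv : v < 1) :
    ∃ a b : ℤ, mob ((2:ℝ)^a * 3^b) ∈ Ioo u v := by
  have h1u : 0 < 1 - u := by linarith
  have h1v : 0 < 1 - v := by linarith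
  have hA : 0 < u/(1-u) := div_pos hu h1u
  have hB : 0 < v/(1-v) := div_pos (by linarith) h1v
  have hAB : u/(1-u) < v/(1-v) := by
    rw [div_lt_div_iff₀ h1u h1v]; nlinarith
  have hlog : Real.log (u/(1-u)) < Real.log (v/(1-v)) :=
    (Real.log_lt_log_iff hA hB).mpr hAB
  obtain ⟨ℓ, hℓmem, hℓ⟩ := log23_dense.exists_between hlog
  rw [SetLike.mem_coe, AddSubgroup.mem_closure_pair] at hℓmem
  obtain ⟨m, n, hmn⟩ := hℓmem
  rw [zsmul_eq_mul, zsmul_eq_mul] at hmn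
  refine ⟨m, n, ?_⟩
  set μ := (2:ℝ)^m * 3^n with hμdef
  have hμpos : 0 < μ := pow23_pos m n
  have hlogμ : Real.log μ = ℓ := by
    rw [hμdef, Real.log_mul (by positivity) (by positivity), Real.log_zpow, Real.log_zpow, hmn]
  have hμ1 : u/(1-u) < μ := by
    have := hℓ.1
    rw [← hlogμ] at this
    exact (Real.log_lt_log_iff hA hμpos).mp this
  have hμ2 : μ < v/(1-v) := by
    have := hℓ.2
    rw [← hlogμ] at this
    exact (Real.log_lt_log_iff hμpos hB).mp this
  constructor
  · rw [mob, lt_div_iff₀ (by linarith : (0:ℝ) < μ + 1)]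
    rw [div_lt_iff₀ h1u] at hμ1
    nlinarith
  · rw [mob, div_lt_iff₀ (by linarith : (0:ℝ) < μ + 1)]
    rw [lt_div_iff₀ h1v] at hμ2
    nlinarith

lemma dense_Tset : Dense Tset := by
  rw [dense_iff_exists_between]
  intro α β hαβ
  set c := (α + β)/2 with hc
  have hcα : α < c := by rw [hc]; linarith
  have hcβ : c < β := by rw [hc]; linarith
  set q := ⌊c⌋ with hq
  set v := min β ((q:ℝ)+1) with hv
  have hcv : c < v := lt_min hcβ (Int.lt_floor_add_one c)
  have hu0 : (0:ℝ) ≤ c - q := by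
    have := Int.floor_le c
    linarith
  have hv1 : v - q ≤ 1 := by
    have : v ≤ (q:ℝ) + 1 := min_le_right _ _
    linarith
  set d := v - c with hd
  have hdpos : 0 < d := by rw [hd]; linarith
  set u₁ := (c - q) + d/3 with hu₁
  set v₁ := (v - q) - d/3 with hv₁
  have h1 : 0 < u₁ := by rw [hu₁]; linarith
  have h2 : u₁ < v₁ := by rw [hu₁, hv₁, hd]; linarith
  have h3 : v₁ < 1 := by rw [hv₁]; linarith
  obtain ⟨a, b, hab⟩ := dense_mob_vals h1 h2 h3
  refine ⟨(q:ℝ) + mob ((2:ℝ)^a * 3^b), ⟨q, a, b, rfl⟩, ?_, ?_⟩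
  · have := hab.1
    rw [hu₁] at this
    linarith
  · have := hab.2
    have hvβ : v ≤ β := min_le_left _ _
    rw [hv₁] at this
    linarith

/-! ### The accumulation set of `psi '' ℤ` -/

def ZSet : Set ℝ := {s : ℝ | ∃ n : ℤ, s = (n:ℝ)}

lemma acc_zero : AccPt (0 : unitInterval) (𝓟 (psi '' ZSet)) := by
  rw [accPt_iff_nhds]
  intro U hU
  obtain ⟨ε, hε, hball⟩ := Metric.mem_nhds_iff.mp hU
  set w := min (ε/2) (1/2) with hw
  have hw0 : 0 < w := lt_min (by linarith) (by norm_num)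
  have hw1 : w < 1 := lt_of_le_of_lt (min_le_right _ _) (by norm_num)
  have hwε : w < ε := lt_of_le_of_lt (min_le_left _ _) (by linarith)
  set s := phiInv w with hs
  have hphis : phi s = w := phi_phiInv ⟨hw0, hw1⟩
  set n : ℤ := ⌊s⌋ - 1 with hn
  have hns : (n:ℝ) < s := by
    push_cast [hn]
    linarith [Int.floor_le s]
  have hphin : phi (n:ℝ) < w := by rw [← hphis]; exact phi_strictMono hns
  refine ⟨psi (n:ℝ), ⟨hball ?_, ⟨(n:ℝ), ⟨n, rfl⟩, rfl⟩⟩, psi_ne_zero _⟩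
  rw [Metric.mem_ball, Subtype.dist_eq]
  simp only [psi_coe, Set.Icc.coe_zero, Real.dist_eq, sub_zero]
  rw [abs_of_pos (phi_mem _).1]
  linarith

lemma acc_one : AccPt (1 : unitInterval) (𝓟 (psi '' ZSet)) := by
  rw [accPt_iff_nhds]
  intro U hU
  obtain ⟨ε, hε, hball⟩ := Metric.mem_nhds_iff.mp hU
  set w := max (1 - ε/2) (1/2) with hw
  have hw0 : 0 < w := lt_of_lt_of_le (by norm_num) (le_max_right _ _)
  have hw1 : w < 1 := max_lt (by linarith) (by norm_num)
  have hwε : 1 - ε < w := lt_of_lt_of_le (by linarith) (le_max_left _ _)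
  set s := phiInv w with hs
  have hphis : phi s = w := phi_phiInv ⟨hw0, hw1⟩
  set n : ℤ := ⌊s⌋ + 1 with hn
  have hns : s < (n:ℝ) := by
    push_cast [hn]
    linarith [Int.lt_floor_add_one s]
  have hphin : w < phi (n:ℝ) := by rw [← hphis]; exact phi_strictMono hns
  refine ⟨psi (n:ℝ), ⟨hball ?_, ⟨(n:ℝ), ⟨n, rfl⟩, rfl⟩⟩, psi_ne_one _⟩
  rw [Metric.mem_ball, Subtype.dist_eq]
  simp only [psi_coe, Set.Icc.coe_one, Real.dist_eq]
  rw [abs_of_neg (by linarith [(phi_mem (n:ℝ)).2] : phi (n:ℝ) - 1 < 0)]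
  have := (phi_mem (n:ℝ)).2
  linarith

lemma not_acc_interior (p : unitInterval) (hp0 : p ≠ 0) (hp1 : p ≠ 1) :
    ¬ AccPt p (𝓟 (psi '' ZSet)) := by
  have hpi : (0:ℝ) < (p:ℝ) ∧ (p:ℝ) < 1 := by
    constructor
    · rcases p.2.1.lt_or_eq with h | h
      · exact h
      · exact absurd (Subtype.ext h.symm) hp0
    · rcases p.2.2.lt_or_eq with h | h
      · exact h
      · exact absurd (Subtype.ext h) hp1
  intro hacc
  set t := phiInv (p:ℝ) with ht
  have hpt : phi t = (p:ℝ) := phi_phiInv hpi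
  set n₀ : ℤ := ⌊t⌋ with hn₀
  set V : Set unitInterval :=
    (fun y : unitInterval => (y:ℝ)) ⁻¹' Ioo (phi ((n₀:ℝ)-1)) (phi ((n₀:ℝ)+2)) with hV
  have hVopen : IsOpen V := isOpen_Ioo.preimage continuous_subtype_val
  have hpV : p ∈ V := by
    constructor
    · show phi ((n₀:ℝ)-1) < (p:ℝ)
      rw [← hpt]; exact phi_strictMono (by linarith [Int.floor_le t])
    · show (p:ℝ) < phi ((n₀:ℝ)+2)
      rw [← hpt]; exact phi_strictMono (by linarith [Int.lt_floor_add_one t])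
  set P2 : Set unitInterval := {psi (n₀:ℝ), psi ((n₀:ℝ)+1)} with hP2
  have hDV : ∀ y ∈ (psi '' ZSet) ∩ V, y ∈ P2 := by
    rintro y ⟨⟨s, ⟨n, rfl⟩, rfl⟩, hyV⟩
    have h1 : ((n₀:ℝ)-1) < (n:ℝ) := phi_strictMono.lt_iff_lt.mp hyV.1
    have h2 : (n:ℝ) < (n₀:ℝ)+2 := phi_strictMono.lt_iff_lt.mp hyV.2
    have hb1 : n₀ - 1 < n := by exact_mod_cast (by push_cast; linarith : ((n₀ - 1 : ℤ):ℝ) < (n:ℝ))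
    have hb2 : n < n₀ + 2 := by exact_mod_cast (by push_cast; linarith : ((n:ℤ):ℝ) < ((n₀ + 2 : ℤ):ℝ))
    have : n = n₀ ∨ n = n₀ + 1 := by omega
    rcases this with rfl | rfl
    · exact mem_insert _ _
    · right
      rw [mem_singleton_iff]
      congr 1
      push_cast
      ring
  have hP2fin : P2.Finite := (finite_singleton _).insert _
  set W : Set unitInterval := (P2 \ {p})ᶜ with hW
  have hWopen : IsOpen W := ((hP2fin.diff).isClosed).isOpen_compl
  have hpW : p ∈ W := fun hmem => hmem.2 rfl
  rw [accPt_iff_nhds] at hacc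
  obtain ⟨y, ⟨hyU, hyD⟩, hyne⟩ := hacc (V ∩ W) ((hVopen.inter hWopen).mem_nhds ⟨hpV, hpW⟩)
  have hyP2 : y ∈ P2 := hDV y ⟨hyD, hyU.1⟩
  have : y ∈ ({p} : Set unitInterval) := by
    by_contra hy
    exact hyU.2 ⟨hyP2, hy⟩
  exact hyne this

lemma acc_set_eq : {p : unitInterval | AccPt p (𝓟 (psi '' ZSet))} = {0, 1} := by
  ext p
  simp only [mem_setOf_eq, mem_insert_iff, mem_singleton_iff]
  constructor
  · intro hacc
    by_contra hne
    push_neg at hne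
    exact not_acc_interior p hne.1 hne.2 hacc
  · rintro (rfl | rfl)
    · exact acc_zero
    · exact acc_one

/-! ### Density upstairs -/

lemma dense_psi_image {S : Set ℝ} (hS : Dense S) : Dense (psi '' S) := by
  rw [dense_iff_exists_between]
  intro p r hpr
  have hpr' : (p:ℝ) < (r:ℝ) := hpr
  set m1 := (2*(p:ℝ) + (r:ℝ))/3 with hm1
  set m2 := ((p:ℝ) + 2*(r:ℝ))/3 with hm2
  have hr0 : (0:ℝ) < (r:ℝ) := lt_of_le_of_lt p.2.1 hpr'
  have hp1 : (p:ℝ) < 1 := lt_of_lt_of_le hpr' r.2.2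
  have hm10 : 0 < m1 := by rw [hm1]; linarith [p.2.1]
  have hm21 : m2 < 1 := by rw [hm2]; linarith [r.2.2]
  have hm12 : m1 < m2 := by rw [hm1, hm2]; linarith
  have hm1m : m1 ∈ Ioo (0:ℝ) 1 := ⟨hm10, lt_trans hm12 hm21⟩
  have hm2m : m2 ∈ Ioo (0:ℝ) 1 := ⟨lt_trans hm10 hm12, hm21⟩
  set s1 := phiInv m1 with hs1
  set s2 := phiInv m2 with hs2
  have hphi1 : phi s1 = m1 := phi_phiInv hm1m
  have hphi2 : phi s2 = m2 := phi_phiInv hm2m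
  have hs12 : s1 < s2 := by
    apply phi_strictMono.lt_iff_lt.mp
    rw [hphi1, hphi2]; exact hm12
  obtain ⟨t, htS, ht⟩ := hS.exists_between hs12
  refine ⟨psi t, ⟨t, htS, rfl⟩, ?_, ?_⟩
  · show (p:ℝ) < (psi t : ℝ)
    rw [psi_coe]
    have : m1 < phi t := by rw [← hphi1]; exact phi_strictMono ht.1
    rw [hm1] at this
    linarith
  · show ((psi t : unitInterval):ℝ) < (r:ℝ)
    rw [psi_coe]
    have : phi t < m2 := by rw [← hphi2]; exact phi_strictMono ht.2
    rw [hm2] at this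
    linarith

lemma rOrbit_zero' : rOrbit 0 = ZSet := rOrbit_zero

lemma rOrbit_half_dense : Dense (rOrbit (1/2 : ℝ)) :=
  dense_Tset.mono (fun x hx => Tset_subset_reach x hx)

end S10

/-- There are orientation-preserving homeomorphisms `f`, `g` of `[0,1]`
and points `z, x ∈ (0,1)` such that, for the group `G` generated by `f` and `g`, the
accumulation set of the orbit of `z` is exactly `{0,1}` and the orbit of `x` is dense in
`[0,1]`. -/
theorem stmt10 : ∃ f g : IntervalHomeo, ∃ z x : unitInterval,
    z ∈ openI ∧ x ∈ openI ∧
    ∀ G : Subgroup IntervalHomeo, G = Subgroup.closure {f, g} →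
      {p | AccPt p (𝓟 (orbit G z))} = {0, 1} ∧
      Dense (orbit G x) := by
  refine ⟨S10.liftHom S10.Fmap, S10.liftHom S10.gR, S10.psi 0, S10.psi (1/2),
    S10.phi_mem 0, S10.phi_mem (1/2), ?_⟩
  intro G hG
  subst hG
  constructor
  · rw [S10.orbit_lift, S10.rOrbit_zero']
    exact S10.acc_set_eq
  · rw [S10.orbit_lift]
    exact S10.dense_psi_image S10.rOrbit_half_dense
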